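/- Let G be a real solvable Lie algebra of dimension n ≥ 4 whose derived ideal G¹ = [G,G] is abelian of dimension n − 2, and suppose A_G has dimension 1. Then there exist linearly independent elements Y, Z ∈ G not belonging to G¹ such that a_Y = 0, a_Z ≠ 0, and A_G = span{a_Z}. -/

import Mathlib

open Module

/-- The restriction to a Lie ideal `I` of the adjoint operator `ad X`,
as a linear endomorphism of `I`. -/
noncomputable def adRestrict {G : Type*} [LieRing G] [LieAlgebra ℝ G]
    (I : LieIdeal ℝ G) (X : G) : Module.End ℝ (I : Submodule ℝ G) :=
  (LieAlgebra.ad ℝ G X).restrict fun v hv => I.lie_mem hv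

/-- The span `A_G` of the restricted adjoint operators inside `End(G¹)`. -/
noncomputable def adSpan (G : Type*) [LieRing G] [LieAlgebra ℝ G] :
    Submodule ℝ (Module.End ℝ ((LieAlgebra.derivedSeries ℝ G 1 : LieIdeal ℝ G) : Submodule ℝ G)) :=
  Submodule.span ℝ (Set.range fun X : G => adRestrict (LieAlgebra.derivedSeries ℝ G 1) X)

/-- `adRestrict` as a linear map in `X`. -/
noncomputable def adRestrictₗ (G : Type*) [LieRing G] [LieAlgebra ℝ G] :
    G →ₗ[ℝ] Module.End ℝ ((LieAlgebra.derivedSeries ℝ G 1 : LieIdeal ℝ G) : Submodule ℝ G) where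
  toFun := adRestrict (LieAlgebra.derivedSeries ℝ G 1)
  map_add' X Y := by
    ext v
    simp [adRestrict, LinearMap.restrict_apply, add_lie]
    rfl
  map_smul' c X := by
    ext v
    simp [adRestrict, LinearMap.restrict_apply]
    rfl

theorem exists_YZ_of_codim_two_abelian_derived_adSpan_dim_one
    (G : Type*) [LieRing G] [LieAlgebra ℝ G] [FiniteDimensional ℝ G]
    [LieAlgebra.IsSolvable G] (n : ℕ) (hn : Module.finrank ℝ G = n) (hn4 : 4 ≤ n)
    (habelian : ∀ u v : G, u ∈ LieAlgebra.derivedSeries ℝ G 1 →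
      v ∈ LieAlgebra.derivedSeries ℝ G 1 → ⁅u, v⁆ = 0)
    (hdim : Module.finrank ℝ (LieAlgebra.derivedSeries ℝ G 1) = n - 2)
    (hA : Module.finrank ℝ (adSpan G) = 1) :
    ∃ Y Z : G, LinearIndependent ℝ ![Y, Z] ∧
      Y ∉ LieAlgebra.derivedSeries ℝ G 1 ∧ Z ∉ LieAlgebra.derivedSeries ℝ G 1 ∧
      adRestrict (LieAlgebra.derivedSeries ℝ G 1) Y = 0 ∧
      adRestrict (LieAlgebra.derivedSeries ℝ G 1) Z ≠ 0 ∧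
      (adSpan G : Submodule ℝ _) =
        Submodule.span ℝ {adRestrict (LieAlgebra.derivedSeries ℝ G 1) Z} := by
  set I := LieAlgebra.derivedSeries ℝ G 1 with hI
  set φ := adRestrictₗ G with hφ
  have hrange : adSpan G = LinearMap.range φ := by
    rw [adSpan, show (fun X : G => adRestrict (LieAlgebra.derivedSeries ℝ G 1) X) = ⇑φ from rfl,
      ← LinearMap.coe_range, Submodule.span_eq]
  -- the kernel contains I
  have hIker : (I : Submodule ℝ G) ≤ LinearMap.ker φ := by
    intro X hX
    rw [LinearMap.mem_ker]
    ext v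
    have : ⁅X, (v : G)⁆ = 0 := habelian X v hX v.2
    simp [hφ, adRestrictₗ, adRestrict, LinearMap.restrict_apply, this, LinearMap.zero_apply]
    exact Subtype.ext this
  -- rank-nullity
  have hrank : finrank ℝ (LinearMap.range φ) + finrank ℝ (LinearMap.ker φ) = n := by
    rw [LinearMap.finrank_range_add_finrank_ker, hn]
  have hr1 : finrank ℝ (LinearMap.range φ) = 1 := by rw [← hrange]; exact hA
  have hker : finrank ℝ (LinearMap.ker φ) = n - 1 := by omega
  -- I is a strict submodule of ker φ
  have hlt : (I : Submodule ℝ G) < LinearMap.ker φ := by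
    refine lt_of_le_of_ne hIker ?_
    intro h
    have hdim' : finrank ℝ (I : Submodule ℝ G) = n - 2 := hdim
    rw [h, hker] at hdim'
    omega
  obtain ⟨Y, hYker, hYI⟩ := SetLike.exists_of_lt hlt
  have hY0 : adRestrict I Y = 0 := hYker
  have hYne : Y ≠ 0 := fun h => hYI (h ▸ (I : Submodule ℝ G).zero_mem)
  -- pick Z with φ Z ≠ 0
  have hφne : φ ≠ 0 := by
    intro h
    rw [h, LinearMap.range_zero, finrank_bot] at hr1
    omega
  obtain ⟨Z, hZ⟩ : ∃ Z, φ Z ≠ 0 := by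
    by_contra h
    push_neg at h
    exact hφne (LinearMap.ext fun x => h x)
  have hZI : Z ∉ I := fun h => hZ (hIker h)
  refine ⟨Y, Z, ?_, hYI, hZI, hY0, hZ, ?_⟩
  · rw [LinearIndependent.pair_iff]
    intro s t hst
    have ht : t = 0 := by
      have := congrArg φ hst
      rw [map_add, map_smul, map_smul, map_zero] at this
      have hY' : φ Y = 0 := hYker
      rw [hY', smul_zero, zero_add] at this
      exact (smul_eq_zero.mp this).resolve_right hZ
    have hs : s = 0 := by
      rw [ht, zero_smul, add_zero] at hst
      exact (smul_eq_zero.mp hst).resolve_right hYne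
    exact ⟨hs, ht⟩
  · have hle : Submodule.span ℝ {adRestrict I Z} ≤ adSpan G := by
      rw [Submodule.span_le, Set.singleton_subset_iff]
      exact Submodule.subset_span ⟨Z, rfl⟩
    refine (Submodule.eq_of_le_of_finrank_eq hle ?_).symm
    have hZ' : adRestrict I Z ≠ 0 := hZ
    rw [finrank_span_singleton hZ', hA]
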